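/- Let a ≥ 0 be a real number. Then for every real x with a-1 ≤ x ≤ a+1, it holds that log h(x) = log h(a) + ∑_{k=1}^{∞} ((-1)^{k-1}/k) · (∑_{n=2}^{∞} u_n/(n+a)^k) · (x-a)^k, where the inner series ∑_{n=2}^{∞} u_n/(n+a)^k converges (as a limit of partial sums) for each k ≥ 1 and the outer series converges. -/

import Mathlib

open Filter Finset Topology

/-- The Thue–Morse sequence with values `±1`: `u n = (-1)^(s₂ n)` where `s₂ n`
is the sum of the binary digits of `n`. -/
def u (n : ℕ) : ℤ := (-1) ^ (Nat.digits 2 n).sum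

lemma u_even (n : ℕ) : u (2 * n) = u n := by
  rcases Nat.eq_zero_or_pos n with rfl | hn
  · rfl
  · have hd : Nat.digits 2 (2 * n) = (2 * n % 2) :: Nat.digits 2 (2 * n / 2) :=
      Nat.digits_def' (by norm_num) (by omega)
    have h1 : 2 * n % 2 = 0 := by omega
    have h2 : 2 * n / 2 = n := by omega
    simp [u, hd, h1, h2]

lemma u_odd (n : ℕ) : u (2 * n + 1) = -u n := by
  have hd : Nat.digits 2 (2 * n + 1) = ((2 * n + 1) % 2) :: Nat.digits 2 ((2 * n + 1) / 2) :=
    Nat.digits_def' (by norm_num) (by omega)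
  have h1 : (2 * n + 1) % 2 = 1 := by omega
  have h2 : (2 * n + 1) / 2 = n := by omega
  simp [u, hd, h1, h2, pow_add]

lemma abs_u (n : ℕ) : |(u n : ℝ)| = 1 := by
  have : ((u n : ℤ) : ℝ) = (-1 : ℝ) ^ (Nat.digits 2 n).sum := by
    rw [u]; push_cast; ring
  rw [this, abs_pow, abs_neg, abs_one, one_pow]

lemma tendsto_of_even_odd {f : ℕ → ℝ} {l : ℝ}
    (he : Tendsto (fun n => f (2 * n)) atTop (𝓝 l))
    (ho : Tendsto (fun n => f (2 * n + 1)) atTop (𝓝 l)) :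
    Tendsto f atTop (𝓝 l) := by
  rw [Metric.tendsto_atTop] at he ho ⊢
  intro ε hε
  obtain ⟨N1, h1⟩ := he ε hε
  obtain ⟨N2, h2⟩ := ho ε hε
  refine ⟨2 * (N1 + N2) + 2, fun n hn => ?_⟩
  rcases Nat.even_or_odd n with ⟨m, hm⟩ | ⟨m, hm⟩
  · have hm' : n = 2 * m := by omega
    rw [hm']; exact h1 m (by omega)
  · rw [hm]; exact h2 m (by omega)

lemma sum_Icc_eq (f : ℕ → ℝ) (j N : ℕ) (h : j ≤ N + 1) :
    ∑ n ∈ Icc j N, f n = ∑ n ∈ range (N + 1), f n - ∑ n ∈ range j, f n := by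
  rw [← Finset.Ico_add_one_right_eq_Icc, eq_sub_iff_add_eq, Finset.range_eq_Ico, Finset.range_eq_Ico, add_comm]
  exact Finset.sum_Ico_consecutive f (Nat.zero_le j) h

lemma tendsto_sum_Icc (f : ℕ → ℝ) (j : ℕ) (hf : Summable f) :
    Tendsto (fun N => ∑ n ∈ Icc j N, f n) atTop (𝓝 (∑' n, f (n + j))) := by
  have h1 : Tendsto (fun N : ℕ => ∑ n ∈ range (N + 1), f n) atTop (𝓝 (∑' n, f n)) :=
    hf.hasSum.tendsto_sum_nat.comp (tendsto_add_atTop_nat 1)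
  have h2 := h1.sub_const (∑ n ∈ range j, f n)
  have h3 : (∑' n, f n) - ∑ n ∈ range j, f n = ∑' n, f (n + j) := by
    rw [← hf.sum_add_tsum_nat_add j]; ring
  rw [h3] at h2
  refine h2.congr' ?_
  filter_upwards [eventually_ge_atTop j] with N hN
  exact (sum_Icc_eq f j N (by omega)).symm

lemma sum_Icc_pair (f : ℕ → ℝ) (N : ℕ) :
    ∑ m ∈ Icc 2 (2 * N + 1), f m = ∑ n ∈ Icc 1 N, (f (2 * n) + f (2 * n + 1)) := by
  induction N with
  | zero => simp
  | succ N ih =>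
      have h1 : 2 * (N + 1) + 1 = (2 * N + 1 + 1) + 1 := by ring
      rw [h1, Finset.sum_Icc_succ_top (by omega), Finset.sum_Icc_succ_top (by omega), ih,
        Finset.sum_Icc_succ_top (by omega : 1 ≤ N + 1)]
      rw [show 2 * (N + 1) = 2 * N + 1 + 1 from by ring]; ring

lemma tendsto_full_of_odd {f : ℕ → ℝ} {l : ℝ}
    (hodd : Tendsto (fun N : ℕ => ∑ m ∈ Icc 2 (2*N+1), f m) atTop (𝓝 l))
    (h0 : Tendsto f atTop (𝓝 0)) :
    Tendsto (fun M : ℕ => ∑ m ∈ Icc 2 M, f m) atTop (𝓝 l) := by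
  apply tendsto_of_even_odd
  · have h1 : Tendsto (fun N : ℕ => f (2*N+1)) atTop (𝓝 0) :=
      h0.comp (tendsto_atTop_mono (fun n => by simp only [id_eq]; omega) tendsto_id)
    have h2 := hodd.sub h1
    rw [sub_zero] at h2
    refine h2.congr' ?_
    filter_upwards [eventually_ge_atTop 1] with N hN
    rw [Finset.sum_Icc_succ_top (by omega : 2 ≤ 2*N+1)]
    ring
  · exact hodd

lemma log_prod_eq (y : ℝ) (hy : -2 < y) (N : ℕ) :
    Real.log (∏ n ∈ Finset.Icc 1 N,
        ((2 * (n : ℝ) + y) / (2 * (n : ℝ) + 1 + y)) ^ (u n)) =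
    ∑ m ∈ Icc 2 (2 * N + 1), (u m : ℝ) * Real.log ((m : ℝ) + y) := by
  have hA : ∀ n : ℕ, n ∈ Icc 1 N → (0:ℝ) < 2 * (n:ℝ) + y := by
    intro n hn
    have : (1:ℝ) ≤ (n:ℝ) := by exact_mod_cast (Finset.mem_Icc.mp hn).1
    linarith
  have hB : ∀ n ∈ Icc 1 N, (0:ℝ) < 2 * (n:ℝ) + 1 + y := by
    intro n hn; have := hA n hn; linarith
  rw [Real.log_prod (fun n hn => zpow_ne_zero _ (div_ne_zero (hA n hn).ne' (hB n hn).ne'))]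
  rw [sum_Icc_pair (fun m => (u m : ℝ) * Real.log ((m : ℝ) + y)) N]
  refine Finset.sum_congr rfl fun n hn => ?_
  rw [Real.log_zpow, Real.log_div (hA n hn).ne' (hB n hn).ne', u_even, u_odd]
  push_cast
  ring

lemma summable_inv_sq_shift (j : ℕ) : Summable (fun n : ℕ => 1 / ((n : ℝ) + (j:ℝ)) ^ 2) := by
  have h0 : Summable (fun n : ℕ => 1 / (n : ℝ) ^ 2) :=
    Real.summable_one_div_nat_pow.mpr one_lt_two
  have := (summable_nat_add_iff j).mpr h0
  refine this.congr fun n => ?_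
  push_cast
  ring_nf

lemma hasSum_log_aux (c s : ℝ) (hs : |s| ≤ 1/2) :
    HasSum (fun k : ℕ => c * ((-1:ℝ)^(k+1) * s^(k+2) / ((k:ℝ)+2)))
      (c * (Real.log (1+s) - s)) := by
  have h0 := Real.hasSum_pow_div_log_of_abs_lt_one (x := -s)
    (by rw [abs_neg]; linarith)
  rw [sub_neg_eq_add] at h0
  have h1 := (hasSum_nat_add_iff' 1).mpr h0
  have h2 := h1.mul_left (-c)
  have he : (-c) * (-Real.log (1+s) - ∑ i ∈ range 1, (-s)^(i+1)/((i:ℝ)+1))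
      = c * (Real.log (1+s) - s) := by
    simp
    ring
  rw [he] at h2
  convert h2 using 1
  · rfl
  funext k
  rw [neg_pow]
  push_cast
  ring

lemma log_remainder_bound (s : ℝ) (hs : |s| ≤ 1/2) :
    |Real.log (1+s) - s| ≤ 2 * s^2 := by
  have key := Real.abs_log_sub_add_sum_range_le (x := -s) (by rw [abs_neg]; linarith) 1
  rw [sub_neg_eq_add] at key
  have e : ∑ i ∈ range 1, (-s)^(i+1)/((i:ℝ)+1) = -s := by simp
  rw [e, abs_neg] at key
  have e2 : -s + Real.log (1+s) = Real.log (1+s) - s := by ring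
  rw [e2] at key
  norm_num at key
  refine key.trans ?_
  have h0 : (0:ℝ) < 1 - |s| := by linarith
  rw [div_le_iff₀ h0]
  have h1 : s^2 * |s| ≤ s^2 * (1/2) := mul_le_mul_of_nonneg_left hs (sq_nonneg s)
  nlinarith [sq_abs s, sq_nonneg s, abs_nonneg s]

set_option maxHeartbeats 1000000 in
/-- If `h x` is, for `x > -2`, the (positive) limit of the partial products
`∏_{n=1}^{N} ((2n+x)/(2n+1+x))^{u_n}`, then for every `a ≥ 0` and every
`x ∈ [a-1, a+1]`, the series `S k = ∑_{n=2}^{∞} u_n/(n+a)^k` converges for each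
`k ≥ 1`, and `log h(x) = log h(a) + ∑_{k=1}^{∞} ((-1)^{k-1}/k) · S k · (x-a)^k`,
the outer series converging as well. -/
theorem stmt_13 (h : ℝ → ℝ)
    (hh : ∀ x : ℝ, -2 < x →
      Tendsto (fun N : ℕ => ∏ n ∈ Finset.Icc 1 N,
        ((2 * (n : ℝ) + x) / (2 * (n : ℝ) + 1 + x)) ^ (u n)) atTop (𝓝 (h x)))
    (hpos : ∀ x : ℝ, -2 < x → 0 < h x)
    (a : ℝ) (ha : 0 ≤ a) (x : ℝ) (hx₁ : a - 1 ≤ x) (hx₂ : x ≤ a + 1) :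
    ∃ S : ℕ → ℝ,
      (∀ k : ℕ, 1 ≤ k →
        Tendsto (fun N : ℕ => ∑ n ∈ Finset.Icc 2 N,
          (u n : ℝ) / ((n : ℝ) + a) ^ k) atTop (𝓝 (S k))) ∧
      Tendsto (fun K : ℕ => ∑ k ∈ Finset.Icc 1 K,
        ((-1 : ℝ) ^ (k - 1) / (k : ℝ)) * S k * (x - a) ^ k) atTop
        (𝓝 (Real.log (h x) - Real.log (h a))) := by
  have hax : -2 < a := by linarith
  have hxx : -2 < x := by linarith
  set t : ℝ := x - a with ht
  have habs : |t| ≤ 1 := abs_le.mpr ⟨by rw [ht]; linarith, by rw [ht]; linarith⟩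
  -- basic positivity facts
  have hb2 : ∀ m : ℕ, (2:ℝ) ≤ ((m+2:ℕ):ℝ) + a := by
    intro m; push_cast; linarith [Nat.cast_nonneg (α := ℝ) m]
  have hbm : ∀ m : ℕ, ((m:ℝ)+2) ≤ ((m+2:ℕ):ℝ) + a := by
    intro m; push_cast; linarith
  have hs_half : ∀ m : ℕ, |t / (((m+2:ℕ):ℝ) + a)| ≤ 1/2 := by
    intro m
    rw [abs_div, abs_of_pos (by linarith [hb2 m] : (0:ℝ) < ((m+2:ℕ):ℝ) + a)]
    exact div_le_div₀ (by norm_num) habs (by norm_num) (hb2 m)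
  have hs_m : ∀ m : ℕ, |t / (((m+2:ℕ):ℝ) + a)| ≤ 1/((m:ℝ)+2) := by
    intro m
    rw [abs_div, abs_of_pos (by linarith [hb2 m] : (0:ℝ) < ((m+2:ℕ):ℝ) + a)]
    exact div_le_div₀ (by norm_num) habs (by positivity) (hbm m)
  -- the log partial sums
  have Hlog : ∀ y : ℝ, -2 < y → Tendsto (fun N : ℕ => ∑ m ∈ Icc 2 (2 * N + 1),
      (u m : ℝ) * Real.log ((m : ℝ) + y)) atTop (𝓝 (Real.log (h y))) := by
    intro y hy
    exact ((hh y hy).log (hpos y hy).ne').congr fun N => log_prod_eq y hy N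
  have Hw_odd : Tendsto (fun N : ℕ => ∑ m ∈ Icc 2 (2 * N + 1),
      (u m : ℝ) * Real.log (1 + t / ((m:ℝ) + a))) atTop
      (𝓝 (Real.log (h x) - Real.log (h a))) := by
    refine ((Hlog x hxx).sub (Hlog a hax)).congr fun N => ?_
    rw [← Finset.sum_sub_distrib]
    refine Finset.sum_congr rfl fun m hm => ?_
    have hm2 : (2:ℝ) ≤ (m:ℝ) := by exact_mod_cast (Finset.mem_Icc.mp hm).1
    have hma : (0:ℝ) < (m:ℝ) + a := by linarith
    have hmx : (0:ℝ) < (m:ℝ) + x := by linarith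
    have he : 1 + t / ((m:ℝ) + a) = ((m:ℝ) + x) / ((m:ℝ) + a) := by
      rw [ht]; field_simp; ring
    rw [he, Real.log_div hmx.ne' hma.ne']
    ring
  have hdivT : Tendsto (fun m : ℕ => (m:ℝ) + a) atTop atTop :=
    tendsto_atTop_add_const_right _ a tendsto_natCast_atTop_atTop
  have hfrac : Tendsto (fun m : ℕ => t / ((m:ℝ) + a)) atTop (𝓝 0) :=
    Tendsto.div_atTop tendsto_const_nhds hdivT
  have hlog0 : Tendsto (fun m : ℕ => Real.log (1 + t / ((m:ℝ) + a))) atTop (𝓝 0) := by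
    have h1 : Tendsto (fun m : ℕ => 1 + t / ((m:ℝ) + a)) atTop (𝓝 1) := by
      simpa using tendsto_const_nhds.add hfrac
    simpa using h1.log one_ne_zero
  have Hw_term : Tendsto (fun m : ℕ => (u m : ℝ) * Real.log (1 + t / ((m:ℝ) + a)))
      atTop (𝓝 0) := by
    refine squeeze_zero_norm (fun m => ?_) (by simpa using hlog0.abs)
    rw [Real.norm_eq_abs, abs_mul, abs_u, one_mul]
  have Hw_full : Tendsto (fun M : ℕ => ∑ m ∈ Icc 2 M,
      (u m : ℝ) * Real.log (1 + t / ((m:ℝ) + a))) atTop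
      (𝓝 (Real.log (h x) - Real.log (h a))) :=
    tendsto_full_of_odd Hw_odd Hw_term
  -- the k = 1 series
  set q : ℕ → ℝ := fun n => (u n : ℝ) *
    (1 / (2 * (n:ℝ) + a) - 1 / (2 * (n:ℝ) + 1 + a)) with hqdef
  have hq1 : Summable (fun n : ℕ => q (n+1)) := by
    refine Summable.of_norm_bounded (summable_inv_sq_shift 1) fun n => ?_
    simp only [hqdef]
    have h1 : (0:ℝ) ≤ (n:ℝ) := n.cast_nonneg
    have hc : ((n+1:ℕ):ℝ) = (n:ℝ)+1 := by push_cast; ring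
    rw [Real.norm_eq_abs, abs_mul, abs_u, one_mul, hc]
    have hA : (0:ℝ) < 2*((n:ℝ)+1)+a := by linarith
    have hB : (0:ℝ) < 2*((n:ℝ)+1)+1+a := by linarith
    have hle : 1/(2*((n:ℝ)+1)+1+a) ≤ 1/(2*((n:ℝ)+1)+a) :=
      one_div_le_one_div_of_le hA (by linarith)
    rw [abs_of_nonneg (by linarith), div_sub_div _ _ hA.ne' hB.ne']
    push_cast
    rw [div_le_div_iff₀ (by positivity) (by positivity)]
    nlinarith [sq_nonneg ((n:ℝ)+1), mul_nonneg ha h1, mul_nonneg ha ha]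
  have hq : Summable q := (summable_nat_add_iff 1).mp hq1
  set S1 : ℝ := ∑' n, q (n+1) with hS1def
  have HS1' : Tendsto (fun N : ℕ => ∑ n ∈ Icc 1 N, q n) atTop (𝓝 S1) :=
    tendsto_sum_Icc q 1 hq
  have Hp_odd : Tendsto (fun N : ℕ => ∑ m ∈ Icc 2 (2*N+1),
      (u m : ℝ) / ((m:ℝ) + a)) atTop (𝓝 S1) := by
    refine HS1'.congr fun N => ?_
    rw [sum_Icc_pair (fun m => (u m : ℝ) / ((m:ℝ) + a)) N]
    refine Finset.sum_congr rfl fun n hn => ?_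
    simp only [hqdef]
    rw [u_even, u_odd]
    push_cast
    ring
  have Hp_term : Tendsto (fun m : ℕ => (u m : ℝ) / ((m:ℝ) + a)) atTop (𝓝 0) := by
    have h0 : Tendsto (fun m : ℕ => 1 / ((m:ℝ) + a)) atTop (𝓝 0) :=
      Tendsto.div_atTop tendsto_const_nhds hdivT
    have h0' := h0.abs
    rw [abs_zero] at h0'
    refine squeeze_zero_norm (fun m => ?_) h0'
    rw [Real.norm_eq_abs, abs_div, abs_u, abs_div, abs_one]
  have HS1_full : Tendsto (fun M : ℕ => ∑ m ∈ Icc 2 M,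
      (u m : ℝ) / ((m:ℝ) + a)) atTop (𝓝 S1) :=
    tendsto_full_of_odd Hp_odd Hp_term
  -- the k ≥ 2 series
  have hfk : ∀ k : ℕ, 2 ≤ k → Summable (fun m : ℕ => (u m : ℝ) / ((m:ℝ) + a) ^ k) := by
    intro k hk
    rw [← summable_nat_add_iff 1]
    refine Summable.of_norm_bounded (summable_inv_sq_shift 1) fun n => ?_
    have h1 : (0:ℝ) ≤ (n:ℝ) := n.cast_nonneg
    have hb0 : (0:ℝ) < ((n+1:ℕ):ℝ) + a := by push_cast; linarith
    rw [Real.norm_eq_abs, abs_div, abs_u, abs_pow, abs_of_pos hb0]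
    push_cast
    rw [div_le_div_iff₀ (by positivity) (by positivity)]
    have h2 : ((n:ℝ)+1)^2 ≤ ((n:ℝ)+1+a)^2 :=
      pow_le_pow_left₀ (by positivity) (by linarith) 2
    have h3 : ((n:ℝ)+1+a)^2 ≤ ((n:ℝ)+1+a)^k := pow_le_pow_right₀ (by linarith) hk
    nlinarith [h2, h3]
  set S : ℕ → ℝ := fun k => if k = 1 then S1
    else ∑' (n : ℕ), (u (n + 2) : ℝ) / (((n + 2 : ℕ) : ℝ) + a) ^ k with hSdef
  refine ⟨S, ?_, ?_⟩
  · intro k hk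
    rcases Nat.lt_or_ge k 2 with hk2 | hk2
    · have hk1 : k = 1 := by omega
      subst hk1
      have hSk : S 1 = S1 := by simp [hSdef]
      rw [hSk]
      simpa only [pow_one] using HS1_full
    · have hSk : S k = ∑' (n : ℕ), (u (n + 2) : ℝ) / (((n + 2 : ℕ) : ℝ) + a) ^ k := by
        simp only [hSdef]; exact if_neg (by omega)
      rw [hSk]
      exact tendsto_sum_Icc _ 2 (hfk k hk2)
  · -- the outer series
    set F : ℕ → ℕ → ℝ := fun m k => (u (m+2) : ℝ) *
      ((-1:ℝ)^(k+1) * (t / (((m+2:ℕ):ℝ) + a))^(k+2) / ((k:ℝ)+2)) with hFdef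
    have hsq2 : Summable (fun m : ℕ => 1/((m:ℝ)+2)^2) := by
      refine (summable_inv_sq_shift 2).congr fun m => ?_
      norm_num
    have hgeo : Summable (fun k : ℕ => ((1:ℝ)/2)^k) :=
      summable_geometric_of_lt_one (by norm_num) (by norm_num)
    have hprod : Summable (fun z : ℕ × ℕ => (1/((z.1:ℝ)+2)^2) * ((1/2:ℝ)^z.2)) := by
      have h1 : Summable (fun m : ℕ => ‖1/((m:ℝ)+2)^2‖) :=
        hsq2.congr fun m => (Real.norm_of_nonneg (by positivity)).symm
      have h2 : Summable (fun k : ℕ => ‖((1:ℝ)/2)^k‖) :=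
        hgeo.congr fun k => (Real.norm_of_nonneg (by positivity)).symm
      exact summable_mul_of_summable_norm h1 h2
    have hFsum : Summable (Function.uncurry F) := by
      refine Summable.of_norm_bounded hprod fun z => ?_
      obtain ⟨m, k⟩ := z
      simp only [Function.uncurry_apply_pair, hFdef]
      rw [Real.norm_eq_abs, abs_mul, abs_u, one_mul, abs_div, abs_mul, abs_pow, abs_pow,
        abs_neg, abs_one, one_pow, one_mul,
        abs_of_pos (by positivity : (0:ℝ) < (k:ℝ)+2)]
      refine (div_le_self (by positivity) (by linarith [Nat.cast_nonneg (α := ℝ) k])).trans ?_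
      rw [pow_add]
      have e2 : |t / (((m+2:ℕ):ℝ) + a)|^k ≤ (1/2:ℝ)^k :=
        pow_le_pow_left₀ (abs_nonneg _) (hs_half m) k
      have e3 : |t / (((m+2:ℕ):ℝ) + a)|^2 ≤ (1/((m:ℝ)+2))^2 :=
        pow_le_pow_left₀ (abs_nonneg _) (hs_m m) 2
      calc |t / (((m+2:ℕ):ℝ) + a)|^k * |t / (((m+2:ℕ):ℝ) + a)|^2
          ≤ (1/2:ℝ)^k * (1/((m:ℝ)+2))^2 :=
            mul_le_mul e2 e3 (by positivity) (by positivity)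
        _ = 1/((m:ℝ)+2)^2 * (1/2:ℝ)^k := by rw [mul_comm, div_pow, one_pow]
    have hFm : ∀ m : ℕ, HasSum (fun k => F m k)
        ((u (m+2) : ℝ) * (Real.log (1 + t / (((m+2:ℕ):ℝ) + a)) - t / (((m+2:ℕ):ℝ) + a))) :=
      fun m => hasSum_log_aux _ _ (hs_half m)
    have hFk2 : ∀ k : ℕ, HasSum (fun m => F m k)
        (((-1:ℝ)^(k+1) * t^(k+2) / ((k:ℝ)+2)) * S (k+2)) := by
      intro k
      have hSk : S (k+2) = ∑' (n : ℕ), (u (n + 2) : ℝ) / (((n + 2 : ℕ) : ℝ) + a) ^ (k+2) := by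
        simp only [hSdef]; exact if_neg (by omega)
      rw [hSk]
      have hshift : Summable (fun m : ℕ => (u (m+2) : ℝ) / (((m+2:ℕ):ℝ) + a) ^ (k+2)) :=
        (summable_nat_add_iff 2).mpr (hfk (k+2) (by omega))
      have h2 := hshift.hasSum.mul_left ((-1:ℝ)^(k+1) * t^(k+2) / ((k:ℝ)+2))
      convert h2 using 1
      · rfl
      funext m
      simp only [hFdef]
      rw [div_pow]
      ring
    have hg2 : Summable (fun m : ℕ => (u (m+2) : ℝ) *
        (Real.log (1 + t / (((m+2:ℕ):ℝ) + a)) - t / (((m+2:ℕ):ℝ) + a))) := by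
      refine Summable.of_norm_bounded (hsq2.mul_left 2) fun m => ?_
      rw [Real.norm_eq_abs, abs_mul, abs_u, one_mul]
      refine (log_remainder_bound _ (hs_half m)).trans ?_
      calc 2 * (t / (((m+2:ℕ):ℝ) + a))^2 = 2 * |t / (((m+2:ℕ):ℝ) + a)|^2 := by rw [sq_abs]
        _ ≤ 2 * (1/((m:ℝ)+2))^2 := by
            have := pow_le_pow_left₀ (abs_nonneg (t / (((m+2:ℕ):ℝ) + a))) (hs_m m) 2
            linarith
        _ = 2 * (1/((m:ℝ)+2)^2) := by rw [div_pow, one_pow]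
    have hgfull : Summable (fun m : ℕ => (u m : ℝ) *
        (Real.log (1 + t / ((m:ℝ) + a)) - t / ((m:ℝ) + a))) :=
      (summable_nat_add_iff 2).mp hg2
    have HGl := tendsto_sum_Icc (fun m : ℕ => (u m : ℝ) *
        (Real.log (1 + t / ((m:ℝ) + a)) - t / ((m:ℝ) + a))) 2 hgfull
    have HGr : Tendsto (fun M : ℕ => ∑ m ∈ Icc 2 M, (u m : ℝ) *
        (Real.log (1 + t / ((m:ℝ) + a)) - t / ((m:ℝ) + a))) atTop
        (𝓝 ((Real.log (h x) - Real.log (h a)) - t * S1)) := by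
      have h1 := Hw_full.sub (HS1_full.const_mul t)
      refine h1.congr fun M => ?_
      rw [Finset.mul_sum, ← Finset.sum_sub_distrib]
      exact Finset.sum_congr rfl fun m hm => by ring
    have key1 : (∑' (n : ℕ), (u (n+2) : ℝ) *
        (Real.log (1 + t / (((n+2:ℕ):ℝ) + a)) - t / (((n+2:ℕ):ℝ) + a)))
        = (Real.log (h x) - Real.log (h a)) - t * S1 :=
      tendsto_nhds_unique HGl HGr
    have hφ2 : ∀ k : ℕ, ((-1:ℝ)^(k+2-1) / ((k+2:ℕ):ℝ)) * S (k+2) * t^(k+2)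
        = ∑' (m : ℕ), F m k := by
      intro k
      rw [(hFk2 k).tsum_eq]
      have e : k+2-1 = k+1 := rfl
      rw [e]
      push_cast
      ring
    have hφsum2 : Summable (fun k : ℕ =>
        ((-1:ℝ)^(k+2-1) / ((k+2:ℕ):ℝ)) * S (k+2) * t^(k+2)) := by
      have h1 := hFsum.prod_symm.prod
      refine h1.congr fun k => ?_
      rw [hφ2 k]
      rfl
    have hφsum : Summable (fun k : ℕ => ((-1:ℝ)^(k-1) / (k:ℝ)) * S k * t^k) :=
      (summable_nat_add_iff 2).mp hφsum2
    have key3 : (∑' (k : ℕ), ((-1:ℝ)^(k+2-1) / ((k+2:ℕ):ℝ)) * S (k+2) * t^(k+2))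
        = (Real.log (h x) - Real.log (h a)) - t * S1 := by
      calc (∑' (k : ℕ), ((-1:ℝ)^(k+2-1) / ((k+2:ℕ):ℝ)) * S (k+2) * t^(k+2))
          = ∑' (k : ℕ), ∑' (m : ℕ), F m k := tsum_congr hφ2
        _ = ∑' (m : ℕ), ∑' (k : ℕ), F m k := hFsum.tsum_comm
        _ = ∑' (n : ℕ), (u (n+2) : ℝ) *
            (Real.log (1 + t / (((n+2:ℕ):ℝ) + a)) - t / (((n+2:ℕ):ℝ) + a)) :=
            tsum_congr fun m => (hFm m).tsum_eq
        _ = _ := key1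
    have hfin := tendsto_sum_Icc (fun k : ℕ => ((-1:ℝ)^(k-1) / (k:ℝ)) * S k * t^k) 1 hφsum
    have hA := Summable.sum_add_tsum_nat_add (f := fun k : ℕ => ((-1:ℝ)^(k-1) / (k:ℝ)) * S k * t^k) 1 hφsum
    have hB := Summable.sum_add_tsum_nat_add (f := fun k : ℕ => ((-1:ℝ)^(k-1) / (k:ℝ)) * S k * t^k) 2 hφsum
    simp only [Finset.sum_range_succ, Finset.sum_range_zero, zero_add] at hA hB
    have hr0 : ((-1:ℝ)^(0-1) / ((0:ℕ):ℝ)) * S 0 * t^0 = 0 := by norm_num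
    have hr1 : ((-1:ℝ)^(1-1) / ((1:ℕ):ℝ)) * S 1 * t^1 = t * S1 := by
      have hS1' : S 1 = S1 := by simp [hSdef]
      rw [hS1']
      norm_num
      ring
    have e1 : (∑' (k : ℕ), ((-1:ℝ)^(k+1-1) / ((k+1:ℕ):ℝ)) * S (k+1) * t^(k+1))
        = Real.log (h x) - Real.log (h a) := by
      have hA' : ((-1:ℝ)^(0-1) / ((0:ℕ):ℝ)) * S 0 * t^0
          + (∑' (k : ℕ), ((-1:ℝ)^(k+1-1) / ((k+1:ℕ):ℝ)) * S (k+1) * t^(k+1))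
          = ∑' (k : ℕ), ((-1:ℝ)^(k-1) / (k:ℝ)) * S k * t^k := hA
      have hB' : ((-1:ℝ)^(0-1) / ((0:ℕ):ℝ)) * S 0 * t^0
          + ((-1:ℝ)^(1-1) / ((1:ℕ):ℝ)) * S 1 * t^1
          + (∑' (k : ℕ), ((-1:ℝ)^(k+2-1) / ((k+2:ℕ):ℝ)) * S (k+2) * t^(k+2))
          = ∑' (k : ℕ), ((-1:ℝ)^(k-1) / (k:ℝ)) * S k * t^k := hB
      rw [hr0] at hA'
      rw [hr0, hr1] at hB'
      rw [key3] at hB'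
      linarith
    rw [← e1]
    exact hfin
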